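/- Fix a density operator ρ on H₁ and define for density operators φ on H₂ the payoff K(ρ,φ) = ∫_{I_R}∫_{I_B} Z(λ,l) dF_ρ(λ) dG_φ(l), with F_ρ(λ)=tr(ρE(λ)), G_φ(l)=tr(φE′(l)) and Z continuous nonnegative with maximum M on the compact rectangle I_B×I_R. Then for density operators φ₁, φ₂: |K(ρ,φ₁) − K(ρ,φ₂)| ≤ M ‖φ₁ − φ₂‖₁. In particular, φ ↦ K(ρ,φ) is Lipschitz continuous in trace norm. -/

import Mathlib

set_option maxHeartbeats 1000000
set_option synthInstance.maxHeartbeats 400000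
set_option linter.unusedVariables false
set_option linter.unusedSectionVars false



open scoped InnerProductSpace
open Filter
noncomputable section

variable {H : Type*} [NormedAddCommGroup H] [InnerProductSpace ℂ H] [CompleteSpace H]
variable {ι : Type*}

/-- The trace of an operator computed along a Hilbert basis. -/
def traceAlong (e : HilbertBasis ι ℂ H) (T : H →L[ℂ] H) : ℂ := ∑' i, ⟪e i, T (e i)⟫_ℂ

/-- The trace norm `tr √(T*T)` computed along a Hilbert basis. -/
def traceNormAlong (e : HilbertBasis ι ℂ H) (T : H →L[ℂ] H) : ℝ :=
  ∑' i, (⟪e i, (CFC.sqrt (star T * T)) (e i)⟫_ℂ).re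

/-- `T` is trace class: the diagonal of `√(T*T)` is summable. -/
def IsTraceClassAlong (e : HilbertBasis ι ℂ H) (T : H →L[ℂ] H) : Prop :=
  Summable fun i => (⟪e i, (CFC.sqrt (star T * T)) (e i)⟫_ℂ).re

/-- A density operator: positive with trace one. -/
def IsDensityOperator (e : HilbertBasis ι ℂ H) (ρ : H →L[ℂ] H) : Prop :=
  ρ.IsPositive ∧ HasSum (fun i => (⟪e i, ρ (e i)⟫_ℂ).re) 1

/-- Trace-norm distance between two operators. -/
def traceDist (e : HilbertBasis ι ℂ H) (ρ φ : H →L[ℂ] H) : ℝ := traceNormAlong e (ρ - φ)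

/-- An orthogonal projection. -/
def IsProjection (P : H →L[ℂ] H) : Prop := IsSelfAdjoint P ∧ IsIdempotentElem P

/-- A spectral resolution: an increasing family of orthogonal projections. -/
def IsSpectralResolution (E : ℝ → H →L[ℂ] H) : Prop :=
  (∀ l, IsProjection (E l)) ∧ ∀ l m : ℝ, l ≤ m → (E m - E l).IsPositive

/-- Lower bound `m(T)` of the quadratic form of `T` over unit vectors. -/
def lowerBound (T : H →L[ℂ] H) : ℝ := sInf ((fun x => (⟪T x, x⟫_ℂ).re) '' {x : H | ‖x‖ = 1})

/-- Upper bound `M(T)` of the quadratic form of `T` over unit vectors. -/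
def upperBound (T : H →L[ℂ] H) : ℝ := sSup ((fun x => (⟪T x, x⟫_ℂ).re) '' {x : H | ‖x‖ = 1})

/-- A Riemann–Stieltjes sum of `f` with respect to `F` for a tagged partition. -/
def RSSum (f F : ℝ → ℝ) (n : ℕ) (x t : ℕ → ℝ) : ℝ :=
  ∑ i ∈ Finset.range n, f (t i) * (F (x (i + 1)) - F (x i))

/-- `I` is the Riemann–Stieltjes integral `∫_a^b f dF`. -/
def IsRSIntegral (f F : ℝ → ℝ) (a b I : ℝ) : Prop :=
  ∀ ε > 0, ∃ δ > 0, ∀ (n : ℕ) (x t : ℕ → ℝ),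
    0 < n → x 0 = a → x n = b → (∀ i < n, x i ≤ x (i + 1)) →
    (∀ i < n, x (i + 1) - x i < δ) → (∀ i < n, t i ∈ Set.Icc (x i) (x (i + 1))) →
    |RSSum f F n x t - I| < ε

lemma re_inner_self (x : H) : (⟪x, x⟫_ℂ).re = ‖x‖ ^ 2 := by
  rw [← RCLike.re_to_complex]
  exact inner_self_eq_norm_sq (𝕜 := ℂ) x

lemma sa_inner {W : H →L[ℂ] H} (hW : IsSelfAdjoint W) (x y : H) :
    ⟪W x, y⟫_ℂ = ⟪x, W y⟫_ℂ := by
  conv_lhs => rw [← hW.star_eq]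
  rw [ContinuousLinearMap.star_eq_adjoint, ContinuousLinearMap.adjoint_inner_left]

lemma parseval_sq (e : HilbertBasis ι ℂ H) (x : H) :
    HasSum (fun j => ‖⟪e j, x⟫_ℂ‖ ^ 2) (‖x‖ ^ 2) := by
  have h := (e.hasSum_inner_mul_inner x x).mapL Complex.reCLM
  have h1 : ∀ j, (⟪x, e j⟫_ℂ * ⟪e j, x⟫_ℂ).re = ‖⟪e j, x⟫_ℂ‖ ^ 2 := by
    intro j
    rw [← inner_conj_symm x (e j), Complex.conj_mul']
    rw [← Complex.ofReal_pow]
    norm_cast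
  have h2 : (⟪x, x⟫_ℂ).re = ‖x‖ ^ 2 := re_inner_self x
  simpa [h1, h2, ← Complex.ofReal_pow] using h

lemma pos_sa {W : H →L[ℂ] H} (hW : 0 ≤ W) : IsSelfAdjoint W :=
  (ContinuousLinearMap.nonneg_iff_isPositive W |>.mp hW).isSelfAdjoint

lemma diag_sqrt {A : H →L[ℂ] H} (hA : 0 ≤ A) (x : H) :
    (⟪x, A x⟫_ℂ).re = ‖CFC.sqrt A x‖ ^ 2 := by
  set W := CFC.sqrt A with hWdef
  have hWW : W * W = A := CFC.sqrt_mul_sqrt_self A hA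
  have hWsa : IsSelfAdjoint W := pos_sa (CFC.sqrt_nonneg _)
  rw [← hWW, ContinuousLinearMap.mul_apply, ← sa_inner hWsa]
  exact re_inner_self (W x)
lemma swap_sum (e : HilbertBasis ι ℂ H) {X : H →L[ℂ] H}
    (hX : Summable fun k => ‖X (e k)‖ ^ 2) :
    Summable (fun k => ‖(star X) (e k)‖ ^ 2) ∧
      ∑' k, ‖(star X) (e k)‖ ^ 2 = ∑' k, ‖X (e k)‖ ^ 2 := by
  set p : ι × ι → ℝ := fun q => ‖⟪e q.2, X (e q.1)⟫_ℂ‖ ^ 2 with hp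
  have hpnn : 0 ≤ p := fun q => by positivity
  have hfib : ∀ k, HasSum (fun j => p (k, j)) (‖X (e k)‖ ^ 2) := fun k => parseval_sq e (X (e k))
  have hsp : Summable p := by
    refine (summable_prod_of_nonneg hpnn).mpr ⟨fun k => (hfib k).summable, ?_⟩
    have h' : (fun k => ∑' j, p (k, j)) = fun k => ‖X (e k)‖ ^ 2 :=
      funext fun k => (hfib k).tsum_eq
    rw [h']; exact hX
  have key : ∀ j k, p (k, j) = ‖⟪e k, (star X) (e j)⟫_ℂ‖ ^ 2 := by
    intro j k
    have h1 : ⟪e j, X (e k)⟫_ℂ = ⟪(star X) (e j), e k⟫_ℂ := by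
      rw [ContinuousLinearMap.star_eq_adjoint, ContinuousLinearMap.adjoint_inner_left]
    have h2 : ‖⟪(star X) (e j), e k⟫_ℂ‖ = ‖⟪e k, (star X) (e j)⟫_ℂ‖ := by
      rw [← inner_conj_symm]; exact RCLike.norm_conj _
    simp only [hp, h1, h2]
  have hfib' : ∀ j, HasSum (fun k => p (k, j)) (‖(star X) (e j)‖ ^ 2) := by
    intro j
    have h := parseval_sq e ((star X) (e j))
    have h' : (fun k => ‖⟪e k, (star X) (e j)⟫_ℂ‖ ^ 2) = fun k => p (k, j) :=
      funext fun k => (key j k).symm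
    rwa [h'] at h
  have hswap : Summable (fun q : ι × ι => p q.swap) := hsp.prod_symm
  have hsum2 : Summable fun j => ‖(star X) (e j)‖ ^ 2 := by
    have h := ((summable_prod_of_nonneg (fun q => hpnn q.swap)).mp hswap).2
    have h' : (fun j => ∑' k, p (k, j)) = fun j => ‖(star X) (e j)‖ ^ 2 :=
      funext fun j => (hfib' j).tsum_eq
    simpa [h'] using h
  refine ⟨hsum2, ?_⟩
  have e1 : ∑' j, ‖(star X) (e j)‖ ^ 2 = ∑' j, ∑' k, p (k, j) := by
    exact tsum_congr fun j => (hfib' j).tsum_eq.symm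
  have e2 : ∑' (j) (k), p (k, j) = ∑' q : ι × ι, p q.swap := (hswap.tsum_prod' fun b => hswap.prod_factor b).symm
  have e3 : ∑' q : ι × ι, p q.swap = ∑' q : ι × ι, p q := by
    exact (Equiv.prodComm ι ι).tsum_eq p
  have e4 : ∑' q : ι × ι, p q = ∑' (k) (j), p (k, j) := hsp.tsum_prod' fun b => hsp.prod_factor b
  have e5 : ∑' (k) (j), p (k, j) = ∑' k, ‖X (e k)‖ ^ 2 :=
    tsum_congr fun k => (hfib k).tsum_eq
  rw [e1, e2, e3, e4, e5]

lemma trace_prod (e : HilbertBasis ι ℂ H) {A : H →L[ℂ] H} (hA : 0 ≤ A)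
    (hsum : Summable fun k => (⟪e k, A (e k)⟫_ℂ).re) (S : H →L[ℂ] H) :
    ∃ σ : ℂ, HasSum (fun k => ⟪e k, (A * S) (e k)⟫_ℂ) σ ∧
      HasSum (fun j => ⟪CFC.sqrt A (e j), S (CFC.sqrt A (e j))⟫_ℂ) σ := by
  set W := CFC.sqrt A with hWdef
  have hWW : W * W = A := CFC.sqrt_mul_sqrt_self A hA
  have hWsa : IsSelfAdjoint W := pos_sa (CFC.sqrt_nonneg _)
  have hsumW : Summable fun k => ‖W (e k)‖ ^ 2 := by
    have h' : (fun k => (⟪e k, A (e k)⟫_ℂ).re) = fun k => ‖W (e k)‖ ^ 2 :=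
      funext fun k => diag_sqrt hA (e k)
    rwa [h'] at hsum
  set q : ι × ι → ℂ := fun r => ⟪W (e r.1), e r.2⟫_ℂ * ⟪W (e r.2), S (e r.1)⟫_ℂ with hq
  -- fiberwise over k
  have hfib : ∀ k, HasSum (fun j => q (k, j)) ⟪e k, (A * S) (e k)⟫_ℂ := by
    intro k
    have hph := e.hasSum_inner_mul_inner (W (e k)) (W (S (e k)))
    have hterm : ∀ j, ⟪W (e k), e j⟫_ℂ * ⟪e j, W (S (e k))⟫_ℂ = q (k, j) := by
      intro j
      rw [hq]
      simp only []
      rw [sa_inner hWsa (e j) (S (e k))]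
    have hval : ⟪W (e k), W (S (e k))⟫_ℂ = ⟪e k, (A * S) (e k)⟫_ℂ := by
      rw [sa_inner hWsa]
      rw [← hWW]
      simp [ContinuousLinearMap.mul_apply]
    rw [← hval]
    exact hph.congr_fun fun j => (hterm j).symm
  -- summability of q via norm bounds
  have hnq : ∀ k j : ι, ‖q (k, j)‖ ≤
      (‖⟪e k, W (e j)⟫_ℂ‖ ^ 2 + ‖⟪e k, (star S) (W (e j))⟫_ℂ‖ ^ 2) / 2 := by
    intro k j
    have h1 : ⟪W (e k), e j⟫_ℂ = ⟪e k, W (e j)⟫_ℂ := sa_inner hWsa _ _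
    have h2 : ⟪W (e j), S (e k)⟫_ℂ = ⟪(star S) (W (e j)), e k⟫_ℂ := by
      rw [ContinuousLinearMap.star_eq_adjoint, ContinuousLinearMap.adjoint_inner_left]
    have h3 : ‖⟪(star S) (W (e j)), e k⟫_ℂ‖ = ‖⟪e k, (star S) (W (e j))⟫_ℂ‖ := by
      rw [← inner_conj_symm]; exact RCLike.norm_conj _
    have : ‖q (k, j)‖ = ‖⟪e k, W (e j)⟫_ℂ‖ * ‖⟪e k, (star S) (W (e j))⟫_ℂ‖ := by
      rw [hq]; simp only [norm_mul, h1, h2, h3]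
    rw [this]
    nlinarith [sq_nonneg (‖⟪e k, W (e j)⟫_ℂ‖ - ‖⟪e k, (star S) (W (e j))⟫_ℂ‖),
      norm_nonneg (⟪e k, W (e j)⟫_ℂ), norm_nonneg (⟪e k, (star S) (W (e j))⟫_ℂ)]
  have hfibn : ∀ j, Summable (fun k => ‖q (k, j)‖) ∧
      ∑' k, ‖q (k, j)‖ ≤ (1 + ‖S‖ ^ 2) / 2 * ‖W (e j)‖ ^ 2 := by
    intro j
    have hg1 : HasSum (fun k => ‖⟪e k, W (e j)⟫_ℂ‖ ^ 2) (‖W (e j)‖ ^ 2) := parseval_sq e _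
    have hg2 : HasSum (fun k => ‖⟪e k, (star S) (W (e j))⟫_ℂ‖ ^ 2) (‖(star S) (W (e j))‖ ^ 2) :=
      parseval_sq e _
    have hg : Summable (fun k =>
        (‖⟪e k, W (e j)⟫_ℂ‖ ^ 2 + ‖⟪e k, (star S) (W (e j))⟫_ℂ‖ ^ 2) / 2) :=
      ((hg1.summable.add hg2.summable).div_const 2)
    have hs : Summable (fun k => ‖q (k, j)‖) :=
      Summable.of_nonneg_of_le (fun k => norm_nonneg _) (fun k => hnq k j) hg
    refine ⟨hs, ?_⟩
    have hts : ∑' k, ‖q (k, j)‖ ≤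
        (‖W (e j)‖ ^ 2 + ‖(star S) (W (e j))‖ ^ 2) / 2 := by
      have := Summable.tsum_le_tsum (fun k => hnq k j) hs hg
      calc ∑' k, ‖q (k, j)‖ ≤ _ := this
        _ = (‖W (e j)‖ ^ 2 + ‖(star S) (W (e j))‖ ^ 2) / 2 := by
            rw [tsum_div_const, (hg1.add hg2).tsum_eq]
    refine hts.trans ?_
    have hSb : ‖(star S) (W (e j))‖ ^ 2 ≤ ‖S‖ ^ 2 * ‖W (e j)‖ ^ 2 := by
      have h0 : ‖(star S) (W (e j))‖ ≤ ‖S‖ * ‖W (e j)‖ := by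
        calc ‖(star S) (W (e j))‖ ≤ ‖star S‖ * ‖W (e j)‖ := (star S).le_opNorm _
          _ = ‖S‖ * ‖W (e j)‖ := by rw [norm_star]
      nlinarith [norm_nonneg ((star S) (W (e j))), norm_nonneg S, norm_nonneg (W (e j))]
    linarith [hSb]
  have hnormq : Summable fun r : ι × ι => ‖q r.swap‖ := by
    refine (summable_prod_of_nonneg (fun r => norm_nonneg _)).mpr ⟨fun j => ?_, ?_⟩
    · exact (hfibn j).1
    · refine Summable.of_nonneg_of_le (fun j => tsum_nonneg fun k => norm_nonneg _)
        (fun j => (hfibn j).2) ?_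
      exact hsumW.mul_left _
  have hqsum : Summable q := by
    have h1 : Summable fun r : ι × ι => q r.swap := Summable.of_norm hnormq
    have := h1.prod_symm
    simpa using this
  set σ : ℂ := ∑' r, q r with hσ
  have hfib2 : ∀ j, HasSum (fun k => q (k, j)) ⟪W (e j), S (W (e j))⟫_ℂ := by
    intro j
    have hph := e.hasSum_inner_mul_inner ((star S) (W (e j))) (W (e j))
    have hval : ⟪(star S) (W (e j)), W (e j)⟫_ℂ = ⟪W (e j), S (W (e j))⟫_ℂ := by
      rw [ContinuousLinearMap.star_eq_adjoint, ContinuousLinearMap.adjoint_inner_left]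
    have hterm : ∀ k, ⟪(star S) (W (e j)), e k⟫_ℂ * ⟪e k, W (e j)⟫_ℂ = q (k, j) := by
      intro k
      have h1 : ⟪e k, W (e j)⟫_ℂ = ⟪W (e k), e j⟫_ℂ := (sa_inner hWsa _ _).symm
      have h2 : ⟪(star S) (W (e j)), e k⟫_ℂ = ⟪W (e j), S (e k)⟫_ℂ := by
        rw [ContinuousLinearMap.star_eq_adjoint, ContinuousLinearMap.adjoint_inner_left]
      rw [h1, h2, hq, mul_comm]
    rw [← hval]
    exact hph.congr_fun fun k => (hterm k).symm
  refine ⟨σ, ?_, ?_⟩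
  · exact HasSum.prod_fiberwise hqsum.hasSum hfib
  · have h1 : HasSum (fun r : ι × ι => q r.swap) σ := by
      rw [hσ]
      exact ((Equiv.prodComm ι ι).hasSum_iff).mpr hqsum.hasSum
    exact HasSum.prod_fiberwise h1 hfib2
lemma tsum_re_eq {α : Type*} {f : α → ℂ} (h : Summable f) :
    (∑' a, f a).re = ∑' a, (f a).re := by
  have := Complex.re_tsum h
  simpa [RCLike.re_to_complex] using this

lemma summable_re {α : Type*} {f : α → ℂ} (h : Summable f) :
    Summable fun a => (f a).re := by
  have := h.mapL Complex.reCLM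
  simpa using this

-- complex diagonal of A * S is summable, A positive with summable real diagonal
lemma diagc_summable (e : HilbertBasis ι ℂ H) {A : H →L[ℂ] H} (hA : 0 ≤ A)
    (hsum : Summable fun k => (⟪e k, A (e k)⟫_ℂ).re) (S : H →L[ℂ] H) :
    Summable fun k => ⟪e k, (A * S) (e k)⟫_ℂ :=
  (trace_prod e hA hsum S).choose_spec.1.summable

lemma trace_eq_sqrt_side (e : HilbertBasis ι ℂ H) {A : H →L[ℂ] H} (hA : 0 ≤ A)
    (hsum : Summable fun k => (⟪e k, A (e k)⟫_ℂ).re) (S : H →L[ℂ] H) :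
    (∑' k, ⟪e k, (A * S) (e k)⟫_ℂ).re
      = ∑' j, (⟪CFC.sqrt A (e j), S (CFC.sqrt A (e j))⟫_ℂ).re ∧
    Summable (fun j => (⟪CFC.sqrt A (e j), S (CFC.sqrt A (e j))⟫_ℂ).re) := by
  obtain ⟨σ, h1, h2⟩ := trace_prod e hA hsum S
  constructor
  · rw [h1.tsum_eq, ← h2.tsum_eq]
    exact tsum_re_eq h2.summable
  · exact summable_re h2.summable

lemma re_inner_comm (S : H →L[ℂ] H) (x : H) : (⟪x, S x⟫_ℂ).re = (⟪S x, x⟫_ℂ).re := by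
  rw [← inner_conj_symm]
  exact Complex.conj_re _

lemma pos_inner_nonneg {S : H →L[ℂ] H} (hS : S.IsPositive) (x : H) :
    0 ≤ (⟪x, S x⟫_ℂ).re := by
  rw [re_inner_comm]
  have := hS.2 x
  simpa [ContinuousLinearMap.reApplyInnerSelf, RCLike.re_to_complex] using this

lemma contr_inner_le {S : H →L[ℂ] H} (hS : (1 - S).IsPositive) (x : H) :
    (⟪x, S x⟫_ℂ).re ≤ ‖x‖ ^ 2 := by
  have h := pos_inner_nonneg hS x
  have hx : (⟪x, (1 - S) x⟫_ℂ).re = ‖x‖ ^ 2 - (⟪x, S x⟫_ℂ).re := by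
    simp [ContinuousLinearMap.sub_apply, inner_sub_right, re_inner_self, ← Complex.ofReal_pow]
  linarith [hx ▸ h]

lemma trace_nonneg' (e : HilbertBasis ι ℂ H) {A : H →L[ℂ] H} (hA : 0 ≤ A)
    (hsum : Summable fun k => (⟪e k, A (e k)⟫_ℂ).re) {S : H →L[ℂ] H}
    (hS : S.IsPositive) :
    0 ≤ (∑' k, ⟪e k, (A * S) (e k)⟫_ℂ).re := by
  rw [(trace_eq_sqrt_side e hA hsum S).1]
  exact tsum_nonneg fun j => pos_inner_nonneg hS _

lemma trace_le' (e : HilbertBasis ι ℂ H) {A : H →L[ℂ] H} (hA : 0 ≤ A)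
    (hsum : Summable fun k => (⟪e k, A (e k)⟫_ℂ).re) {S : H →L[ℂ] H}
    (hS : (1 - S).IsPositive) :
    (∑' k, ⟪e k, (A * S) (e k)⟫_ℂ).re ≤ ∑' k, (⟪e k, A (e k)⟫_ℂ).re := by
  obtain ⟨heq, hs⟩ := trace_eq_sqrt_side e hA hsum S
  rw [heq]
  have hW : ∀ k, (⟪e k, A (e k)⟫_ℂ).re = ‖CFC.sqrt A (e k)‖ ^ 2 :=
    fun k => diag_sqrt hA (e k)
  calc ∑' j, (⟪CFC.sqrt A (e j), S (CFC.sqrt A (e j))⟫_ℂ).re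
      ≤ ∑' j, ‖CFC.sqrt A (e j)‖ ^ 2 := by
        refine Summable.tsum_le_tsum (fun j => contr_inner_le hS _) hs ?_
        exact (funext hW) ▸ hsum
    _ = ∑' k, (⟪e k, A (e k)⟫_ℂ).re := by exact tsum_congr fun k => (hW k).symm
lemma CS_bound (e : HilbertBasis ι ℂ H) {φ : H →L[ℂ] H} (hφ : 0 ≤ φ)
    (hsum : Summable fun k => (⟪e k, φ (e k)⟫_ℂ).re) {U : H →L[ℂ] H}
    (hUsa : IsSelfAdjoint U) (hUn : ‖U‖ ≤ 1) (s : Finset ι) :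
    ∑ k ∈ s, ‖⟪e k, (φ * U) (e k)⟫_ℂ‖ ≤ ∑' k, (⟪e k, φ (e k)⟫_ℂ).re := by
  set W := CFC.sqrt φ with hWdef
  have hWW : W * W = φ := CFC.sqrt_mul_sqrt_self φ hφ
  have hWsa : IsSelfAdjoint W := pos_sa (CFC.sqrt_nonneg _)
  have hdiag : ∀ k, (⟪e k, φ (e k)⟫_ℂ).re = ‖W (e k)‖ ^ 2 := fun k => diag_sqrt hφ (e k)
  have hsumW : Summable fun k => ‖W (e k)‖ ^ 2 := by rwa [funext hdiag] at hsum
  have htr : ∑' k, (⟪e k, φ (e k)⟫_ℂ).re = ∑' k, ‖W (e k)‖ ^ 2 := tsum_congr hdiag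
  -- pointwise bound
  have hterm : ∀ k, ‖⟪e k, (φ * U) (e k)⟫_ℂ‖ ≤ (‖W (e k)‖ ^ 2 + ‖(W * U) (e k)‖ ^ 2) / 2 := by
    intro k
    have h1 : ⟪e k, (φ * U) (e k)⟫_ℂ = ⟪W (e k), (W * U) (e k)⟫_ℂ := by
      rw [← hWW]
      simp only [ContinuousLinearMap.mul_apply]
      rw [← sa_inner hWsa]
    rw [h1]
    calc ‖⟪W (e k), (W * U) (e k)⟫_ℂ‖ ≤ ‖W (e k)‖ * ‖(W * U) (e k)‖ := norm_inner_le_norm _ _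
      _ ≤ (‖W (e k)‖ ^ 2 + ‖(W * U) (e k)‖ ^ 2) / 2 := by
          nlinarith [sq_nonneg (‖W (e k)‖ - ‖(W * U) (e k)‖)]
  -- summability of the (W*U) part
  have hUW : ∀ k, ‖(U * W) (e k)‖ ^ 2 ≤ ‖W (e k)‖ ^ 2 := by
    intro k
    have h0 : ‖(U * W) (e k)‖ ≤ ‖W (e k)‖ := by
      calc ‖U (W (e k))‖ ≤ ‖U‖ * ‖W (e k)‖ := U.le_opNorm _
        _ ≤ 1 * ‖W (e k)‖ := by
            exact mul_le_mul_of_nonneg_right hUn (norm_nonneg _)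
        _ = ‖W (e k)‖ := one_mul _
    nlinarith [norm_nonneg ((U * W) (e k)), norm_nonneg (W (e k))]
  have hsumUW : Summable fun k => ‖(U * W) (e k)‖ ^ 2 :=
    Summable.of_nonneg_of_le (fun k => sq_nonneg _) hUW hsumW
  have hstar : star (U * W) = W * U := by
    rw [star_mul, hUsa.star_eq, hWsa.star_eq]
  obtain ⟨hsWU, htWU⟩ := swap_sum e hsumUW
  rw [hstar] at hsWU htWU
  have htWU' : ∑' k, ‖(W * U) (e k)‖ ^ 2 ≤ ∑' k, ‖W (e k)‖ ^ 2 := by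
    rw [htWU]
    exact Summable.tsum_le_tsum hUW hsumUW hsumW
  calc ∑ k ∈ s, ‖⟪e k, (φ * U) (e k)⟫_ℂ‖
      ≤ ∑ k ∈ s, (‖W (e k)‖ ^ 2 + ‖(W * U) (e k)‖ ^ 2) / 2 :=
        Finset.sum_le_sum fun k _ => hterm k
    _ = (∑ k ∈ s, ‖W (e k)‖ ^ 2 + ∑ k ∈ s, ‖(W * U) (e k)‖ ^ 2) / 2 := by
        rw [← Finset.sum_add_distrib, Finset.sum_div]
    _ ≤ (∑' k, ‖W (e k)‖ ^ 2 + ∑' k, ‖W (e k)‖ ^ 2) / 2 := by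
        have b1 : ∑ k ∈ s, ‖W (e k)‖ ^ 2 ≤ ∑' k, ‖W (e k)‖ ^ 2 :=
          Summable.sum_le_tsum s (fun k _ => sq_nonneg _) hsumW
        have b2 : ∑ k ∈ s, ‖(W * U) (e k)‖ ^ 2 ≤ ∑' k, ‖(W * U) (e k)‖ ^ 2 :=
          Summable.sum_le_tsum s (fun k _ => sq_nonneg _) hsWU
        linarith [htWU']
    _ = ∑' k, ‖W (e k)‖ ^ 2 := by ring
    _ = ∑' k, (⟪e k, φ (e k)⟫_ℂ).re := htr.symm

lemma key_summable (e : HilbertBasis ι ℂ H) {φ₁ φ₂ : H →L[ℂ] H}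
    (h₁ : 0 ≤ φ₁) (h₂ : 0 ≤ φ₂)
    (hs₁ : Summable fun k => (⟪e k, φ₁ (e k)⟫_ℂ).re)
    (hs₂ : Summable fun k => (⟪e k, φ₂ (e k)⟫_ℂ).re)
    {g : ℝ → ℝ} (hgc : Continuous g) (hg0 : ∀ t, 0 ≤ g t) (hgle : ∀ t, g t ≤ |t|) :
    Summable fun k => (⟪e k, (cfc g (φ₁ - φ₂)) (e k)⟫_ℂ).re := by
  set T := φ₁ - φ₂ with hT
  have hTsa : IsSelfAdjoint T := ((pos_sa h₁).sub (pos_sa h₂))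
  set G := cfc g T with hG
  have hGpos : 0 ≤ G := cfc_nonneg fun x _ => hg0 x
  have hGnn : ∀ k, 0 ≤ (⟪e k, G (e k)⟫_ℂ).re := fun k =>
    pos_inner_nonneg ((ContinuousLinearMap.nonneg_iff_isPositive G).mp hGpos) _
  set c : ℝ := (∑' k, (⟪e k, φ₁ (e k)⟫_ℂ).re) + ∑' k, (⟪e k, φ₂ (e k)⟫_ℂ).re with hc
  refine summable_of_sum_le (c := c) hGnn ?_
  intro s
  refine le_of_forall_pos_le_add ?_
  intro ε' hε'
  set ε : ℝ := ε' / (s.card + 1) with hεdef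
  have hε : 0 < ε := by positivity
  set sε : ℝ → ℝ := fun t => t / max |t| ε with hsε
  have hmaxpos : ∀ t : ℝ, 0 < max |t| ε := fun t => lt_max_of_lt_right hε
  have hsεc : Continuous sε := by
    apply Continuous.div continuous_id ((continuous_abs).max continuous_const)
    exact fun t => ne_of_gt (hmaxpos t)
  set U := cfc sε T with hU
  have hUsa : IsSelfAdjoint U := cfc_predicate sε T
  have hUn : ‖U‖ ≤ 1 := by
    apply norm_cfc_le zero_le_one
    intro x hx
    rw [Real.norm_eq_abs, abs_div, abs_of_pos (hmaxpos x)]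
    exact div_le_one_of_le₀ (le_max_left _ _) (hmaxpos x).le
  have hTU : T * U = cfc (fun t => t * sε t) T := by
    rw [cfc_mul (fun t : ℝ => t) sε T continuous_id.continuousOn hsεc.continuousOn,
      cfc_id' ℝ T]
  have hle : G ≤ T * U + algebraMap ℝ (H →L[ℂ] H) ε := by
    have hrhs : cfc (fun t => t * sε t + ε) T = T * U + algebraMap ℝ (H →L[ℂ] H) ε := by
      rw [cfc_add (a := T) (fun t : ℝ => t * sε t) (fun _ => ε)
        ((continuous_id.mul hsεc).continuousOn) continuousOn_const,
        ← hTU, cfc_const ε T hTsa]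
    rw [← hrhs, hG]
    refine cfc_mono ?_ hgc.continuousOn ((continuous_id.mul hsεc).add continuous_const).continuousOn
    intro t _
    rcases le_or_gt ε |t| with h | h
    · have ht0 : t ≠ 0 := by
        intro h0; rw [h0, abs_zero] at h; exact absurd h (not_le.mpr hε)
      have hmax : max |t| ε = |t| := max_eq_left h
      have : t * sε t = |t| := by
        have h4 : |t| ≠ 0 := abs_ne_zero.mpr ht0
        simp only [hsε, hmax]
        field_simp; exact (sq_abs t).symm
      rw [this]
      linarith [hgle t, hε]
    · have h1 : t * sε t = t ^ 2 / max |t| ε := by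
        rw [hsε]; simp only []; ring
      have h2 : 0 ≤ t * sε t := by rw [h1]; positivity
      linarith [hgle t, h.le, hg0 t]
  -- diagonal estimate
  have hdiag : ∀ k, (⟪e k, G (e k)⟫_ℂ).re ≤ (⟪e k, (T * U) (e k)⟫_ℂ).re + ε := by
    intro k
    have hpos : ((T * U + algebraMap ℝ (H →L[ℂ] H) ε) - G).IsPositive :=
      (ContinuousLinearMap.nonneg_iff_isPositive _).mp (by simpa using sub_nonneg.mpr hle)
    have h0 := pos_inner_nonneg hpos (e k)
    have halg : (⟪e k, (algebraMap ℝ (H →L[ℂ] H) ε) (e k)⟫_ℂ).re = ε := by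
      rw [Algebra.algebraMap_eq_smul_one]
      have h1 : ((ε • (1 : H →L[ℂ] H)) (e k)) = (ε : ℂ) • (e k) := by
        have : ((ε • (1 : H →L[ℂ] H)) (e k)) = ε • (e k) := rfl
        rw [this, RCLike.real_smul_eq_coe_smul (K := ℂ)]
        rfl
      rw [h1, inner_smul_right]
      have hn : ‖e k‖ = 1 := e.orthonormal.1 k
      rw [Complex.re_ofReal_mul, re_inner_self, hn]
      norm_num
    have hexp : (⟪e k, ((T * U + algebraMap ℝ (H →L[ℂ] H) ε) - G) (e k)⟫_ℂ).re
        = (⟪e k, (T * U) (e k)⟫_ℂ).re + ε - (⟪e k, G (e k)⟫_ℂ).re := by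
      simp only [ContinuousLinearMap.sub_apply, ContinuousLinearMap.add_apply,
        inner_sub_right, inner_add_right, Complex.sub_re, Complex.add_re]
      rw [halg]
    linarith [hexp ▸ h0]
  have hsplit : ∀ k, (⟪e k, (T * U) (e k)⟫_ℂ).re
      ≤ ‖⟪e k, (φ₁ * U) (e k)⟫_ℂ‖ + ‖⟪e k, (φ₂ * U) (e k)⟫_ℂ‖ := by
    intro k
    have h1 : T * U = φ₁ * U - φ₂ * U := by rw [hT, sub_mul]
    have h2 : (⟪e k, (T * U) (e k)⟫_ℂ).re
        = (⟪e k, (φ₁ * U) (e k)⟫_ℂ).re - (⟪e k, (φ₂ * U) (e k)⟫_ℂ).re := by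
      rw [h1]
      simp [ContinuousLinearMap.sub_apply, inner_sub_right]
    rw [h2]
    have a1 : (⟪e k, (φ₁ * U) (e k)⟫_ℂ).re ≤ ‖⟪e k, (φ₁ * U) (e k)⟫_ℂ‖ := Complex.re_le_norm _
    have a2 : -(⟪e k, (φ₂ * U) (e k)⟫_ℂ).re ≤ ‖⟪e k, (φ₂ * U) (e k)⟫_ℂ‖ := by
      have hh := Complex.abs_re_le_norm (⟪e k, (φ₂ * U) (e k)⟫_ℂ)
      calc -(⟪e k, (φ₂ * U) (e k)⟫_ℂ).re ≤ |(⟪e k, (φ₂ * U) (e k)⟫_ℂ).re| := neg_le_abs _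
        _ ≤ _ := hh
    linarith
  calc ∑ k ∈ s, (⟪e k, G (e k)⟫_ℂ).re
      ≤ ∑ k ∈ s, ((⟪e k, (T * U) (e k)⟫_ℂ).re + ε) := Finset.sum_le_sum fun k _ => hdiag k
    _ = ∑ k ∈ s, (⟪e k, (T * U) (e k)⟫_ℂ).re + s.card * ε := by
        rw [Finset.sum_add_distrib]; simp [mul_comm]
    _ ≤ ∑ k ∈ s, (‖⟪e k, (φ₁ * U) (e k)⟫_ℂ‖ + ‖⟪e k, (φ₂ * U) (e k)⟫_ℂ‖) + s.card * ε := by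
        have := Finset.sum_le_sum fun k (_ : k ∈ s) => hsplit k
        linarith
    _ = (∑ k ∈ s, ‖⟪e k, (φ₁ * U) (e k)⟫_ℂ‖ + ∑ k ∈ s, ‖⟪e k, (φ₂ * U) (e k)⟫_ℂ‖)
          + s.card * ε := by rw [Finset.sum_add_distrib]
    _ ≤ c + s.card * ε := by
        have b1 := CS_bound e h₁ hs₁ hUsa hUn s
        have b2 := CS_bound e h₂ hs₂ hUsa hUn s
        rw [hc]; linarith
    _ ≤ c + ε' := by
        have hpos : (0:ℝ) < s.card + 1 := by positivity
        have hcard : (s.card : ℝ) * ε ≤ ε' := by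
          rw [hεdef]
          calc (s.card : ℝ) * (ε' / (s.card + 1)) = (s.card / (s.card + 1)) * ε' := by ring
            _ ≤ 1 * ε' := by
                have h3 : (s.card:ℝ)/(s.card+1) ≤ 1 := by
                  rw [div_le_one hpos]; linarith
                nlinarith [hε'.le]
            _ = ε' := one_mul _
        linarith
lemma traceAlong_re (e : HilbertBasis ι ℂ H) {X : H →L[ℂ] H}
    (h : Summable fun k => ⟪e k, X (e k)⟫_ℂ) :
    (traceAlong e X).re = ∑' k, (⟪e k, X (e k)⟫_ℂ).re := tsum_re_eq h

lemma traceAlong_sub (e : HilbertBasis ι ℂ H) {X Y : H →L[ℂ] H}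
    (hX : Summable fun k => ⟪e k, X (e k)⟫_ℂ) (hY : Summable fun k => ⟪e k, Y (e k)⟫_ℂ) :
    traceAlong e (X - Y) = traceAlong e X - traceAlong e Y := by
  unfold traceAlong
  have h : ∀ k, ⟪e k, (X - Y) (e k)⟫_ℂ = ⟪e k, X (e k)⟫_ℂ - ⟪e k, Y (e k)⟫_ℂ := by
    intro k; rw [ContinuousLinearMap.sub_apply, inner_sub_right]
  rw [tsum_congr h]
  exact Summable.tsum_sub hX hY

lemma w_nonneg (e : HilbertBasis ι ℂ H) {A : H →L[ℂ] H} (hA : 0 ≤ A)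
    (hsum : Summable fun k => (⟪e k, A (e k)⟫_ℂ).re) {S : H →L[ℂ] H}
    (hS : S.IsPositive) : 0 ≤ (traceAlong e (A * S)).re := by
  rw [traceAlong]
  exact trace_nonneg' e hA hsum hS

lemma w_le (e : HilbertBasis ι ℂ H) {A : H →L[ℂ] H} (hA : 0 ≤ A)
    (hsum : Summable fun k => (⟪e k, A (e k)⟫_ℂ).re) {S : H →L[ℂ] H}
    (hS : (1 - S).IsPositive) :
    (traceAlong e (A * S)).re ≤ ∑' k, (⟪e k, A (e k)⟫_ℂ).re := by
  rw [traceAlong]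
  exact trace_le' e hA hsum hS

lemma trace_S_sub (e : HilbertBasis ι ℂ H) {A : H →L[ℂ] H} (hA : 0 ≤ A)
    (hsum : Summable fun k => (⟪e k, A (e k)⟫_ℂ).re) (S₁ S₂ : H →L[ℂ] H) :
    (traceAlong e (A * S₁)).re - (traceAlong e (A * S₂)).re
      = (traceAlong e (A * (S₁ - S₂))).re := by
  have h : A * (S₁ - S₂) = A * S₁ - A * S₂ := mul_sub A S₁ S₂
  rw [h, traceAlong_sub e (diagc_summable e hA hsum S₁) (diagc_summable e hA hsum S₂)]
  simp [Complex.sub_re]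

lemma IsProjection.pos {P : H →L[ℂ] H} (hP : IsProjection P) : P.IsPositive := by
  refine ⟨hP.1.isSymmetric, fun x => ?_⟩
  have h1 : P (P x) = P x := by
    rw [← ContinuousLinearMap.mul_apply, hP.2]
  have h2 : ⟪P x, x⟫_ℂ = ⟪P x, P x⟫_ℂ := by
    calc ⟪P x, x⟫_ℂ = ⟪P (P x), x⟫_ℂ := by rw [h1]
      _ = ⟪P x, P x⟫_ℂ := sa_inner hP.1 (P x) x
  rw [ContinuousLinearMap.reApplyInnerSelf, RCLike.re_to_complex, h2, re_inner_self]
  positivity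

lemma one_sub_proj {P : H →L[ℂ] H} (hP : IsProjection P) : IsProjection (1 - P) :=
  ⟨(IsSelfAdjoint.one _).sub hP.1, hP.2.one_sub⟩
lemma sqrt_star_mul_self {T : H →L[ℂ] H} (h : IsSelfAdjoint T) :
    CFC.sqrt (star T * T) = cfc (fun t : ℝ => |t|) T := by
  apply CFC.sqrt_unique
  · rw [← cfc_mul (fun t : ℝ => |t|) (fun t : ℝ => |t|) T
      continuous_abs.continuousOn continuous_abs.continuousOn]
    conv_rhs => rw [h.star_eq, ← cfc_id ℝ T, ← cfc_mul (id : ℝ → ℝ) (id : ℝ → ℝ) T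
      continuous_id.continuousOn continuous_id.continuousOn]
    exact cfc_congr fun x _ => (abs_mul_abs_self x)
  · exact cfc_nonneg fun x _ => abs_nonneg x

lemma max_add_max_neg (t : ℝ) : max t 0 + max (-t) 0 = |t| := by
  rcases le_total 0 t with h | h
  · rw [max_eq_left h, max_eq_right (neg_nonpos.mpr h), add_zero, abs_of_nonneg h]
  · rw [max_eq_right h, max_eq_left (neg_nonneg.mpr h), zero_add, abs_of_nonpos h]

lemma max_sub_max_neg (t : ℝ) : max t 0 - max (-t) 0 = t := by
  rcases le_total 0 t with h | h
  · rw [max_eq_left h, max_eq_right (neg_nonpos.mpr h), sub_zero]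
  · rw [max_eq_right h, max_eq_left (neg_nonneg.mpr h), zero_sub, neg_neg]

lemma res_one_sub {E : ℝ → H →L[ℂ] H} (hE : IsSpectralResolution E) {a b : ℝ} (hab : a ≤ b) :
    (1 - (E b - E a)).IsPositive := by
  have h : 1 - (E b - E a) = (1 - E b) + E a := by abel
  rw [h]
  exact ((one_sub_proj (hE.1 b)).pos).add (hE.1 a).pos

lemma lb_le_ub [Nontrivial H] (T : H →L[ℂ] H) : lowerBound T ≤ upperBound T := by
  have hne : ((fun x : H => (⟪T x, x⟫_ℂ).re) '' {x : H | ‖x‖ = 1}).Nonempty := by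
    obtain ⟨x, hx⟩ := exists_norm_eq H zero_le_one
    exact ⟨_, ⟨x, hx, rfl⟩⟩
  have hb : ∀ y ∈ (fun x : H => (⟪T x, x⟫_ℂ).re) '' {x : H | ‖x‖ = 1}, |y| ≤ ‖T‖ := by
    rintro y ⟨x, hx, rfl⟩
    simp only [Set.mem_setOf_eq] at hx
    calc |(⟪T x, x⟫_ℂ).re| ≤ ‖⟪T x, x⟫_ℂ‖ := Complex.abs_re_le_norm _
      _ = ‖⟪T x, x⟫_ℂ‖ := rfl
      _ ≤ ‖T x‖ * ‖x‖ := norm_inner_le_norm _ _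
      _ ≤ ‖T‖ * ‖x‖ * ‖x‖ := by
          have := T.le_opNorm x
          nlinarith [norm_nonneg x]
      _ = ‖T‖ := by rw [hx]; ring
  refine csInf_le_csSup hne ⟨-‖T‖, fun y hy => ?_⟩ ⟨‖T‖, fun y hy => ?_⟩
  · linarith [abs_le.mp (hb y hy)]
  · linarith [abs_le.mp (hb y hy)]

lemma unif_partition {a b δ : ℝ} (hab : a ≤ b) (hδ : 0 < δ) :
    ∃ (n : ℕ) (x : ℕ → ℝ), 0 < n ∧ x 0 = a ∧ x n = b ∧ (∀ i, x i ≤ x (i + 1)) ∧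
      (∀ i, x (i + 1) - x i < δ) ∧ (∀ i ≤ n, x i ∈ Set.Icc a b) := by
  obtain ⟨m, hm⟩ := exists_nat_gt ((b - a) / δ)
  set n : ℕ := m + 1 with hn
  have hnpos : 0 < n := Nat.succ_pos m
  have hnR : ((b - a) / δ) < (n : ℝ) := by
    have : (m : ℝ) < n := by exact_mod_cast Nat.lt_succ_self m
    linarith
  have hnR0 : (0 : ℝ) < n := by positivity
  set s : ℝ := (b - a) / n with hs
  have hs0 : 0 ≤ s := div_nonneg (by linarith) hnR0.le
  have hsδ : s < δ := by
    rw [hs, div_lt_iff₀ hnR0]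
    have h := (div_lt_iff₀ hδ).mp hnR
    linarith
  refine ⟨n, fun i => a + i * s, hnpos, by simp, ?_, ?_, ?_, ?_⟩
  · show a + (n : ℝ) * s = b
    rw [hs]; field_simp; ring
  · intro i
    show a + (i : ℝ) * s ≤ a + ((i + 1 : ℕ) : ℝ) * s
    push_cast
    nlinarith [hs0]
  · intro i
    show a + ((i + 1 : ℕ) : ℝ) * s - (a + (i : ℝ) * s) < δ
    push_cast
    linarith
  · intro i hi
    constructor
    · show a ≤ a + (i : ℝ) * s
      nlinarith [mul_nonneg (Nat.cast_nonneg i) hs0]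
    · show a + (i : ℝ) * s ≤ b
      have hi' : (i : ℝ) ≤ n := by exact_mod_cast hi
      have h2 : (i : ℝ) * s ≤ n * s := mul_le_mul_of_nonneg_right hi' hs0
      have h3 : (n : ℝ) * s = b - a := by rw [hs]; field_simp
      linarith

/-- The payoff `K(ρ, ·)` is Lipschitz in trace norm:
`|K(ρ,φ₁) − K(ρ,φ₂)| ≤ M ‖φ₁ − φ₂‖₁` where `M = max Z`. -/
theorem payoff_lipschitz_in_traceNorm
    {H₁ H₂ : Type*} [NormedAddCommGroup H₁] [InnerProductSpace ℂ H₁] [CompleteSpace H₁]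
    [NormedAddCommGroup H₂] [InnerProductSpace ℂ H₂] [CompleteSpace H₂]
    [Nontrivial H₁] [Nontrivial H₂] {ι₁ ι₂ : Type*}
    (e₁ : HilbertBasis ι₁ ℂ H₁) (e₂ : HilbertBasis ι₂ ℂ H₂)
    (B : H₁ →L[ℂ] H₁) (R : H₂ →L[ℂ] H₂)
    (hB : IsSelfAdjoint B) (hR : IsSelfAdjoint R)
    (E : ℝ → H₁ →L[ℂ] H₁) (E' : ℝ → H₂ →L[ℂ] H₂)
    (hE : IsSpectralResolution E) (hE' : IsSpectralResolution E')
    (ρ : H₁ →L[ℂ] H₁) (φ₁ φ₂ : H₂ →L[ℂ] H₂)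
    (hρ : IsDensityOperator e₁ ρ)
    (hφ₁ : IsDensityOperator e₂ φ₁) (hφ₂ : IsDensityOperator e₂ φ₂)
    (Z : ℝ → ℝ → ℝ) (M : ℝ)
    (hZc : ContinuousOn (fun p : ℝ × ℝ => Z p.1 p.2)
      (Set.Icc (lowerBound B) (upperBound B) ×ˢ Set.Icc (lowerBound R) (upperBound R)))
    (hZ0 : ∀ lam ∈ Set.Icc (lowerBound B) (upperBound B),
      ∀ l ∈ Set.Icc (lowerBound R) (upperBound R), 0 ≤ Z lam l)
    (hZM : ∀ lam ∈ Set.Icc (lowerBound B) (upperBound B),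
      ∀ l ∈ Set.Icc (lowerBound R) (upperBound R), Z lam l ≤ M)
    (hMmax : ∃ lam ∈ Set.Icc (lowerBound B) (upperBound B),
      ∃ l ∈ Set.Icc (lowerBound R) (upperBound R), Z lam l = M)
    (g : ℝ → ℝ) (K₁ K₂ : ℝ)
    (hg : ∀ l ∈ Set.Icc (lowerBound R) (upperBound R),
      IsRSIntegral (fun lam => Z lam l) (fun lam => (traceAlong e₁ (ρ * E lam)).re)
        (lowerBound B) (upperBound B) (g l))
    (hK₁ : IsRSIntegral g (fun l => (traceAlong e₂ (φ₁ * E' l)).re)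
      (lowerBound R) (upperBound R) K₁)
    (hK₂ : IsRSIntegral g (fun l => (traceAlong e₂ (φ₂ * E' l)).re)
      (lowerBound R) (upperBound R) K₂) :
    |K₁ - K₂| ≤ M * traceNormAlong e₂ (φ₁ - φ₂) := by
  classical
  have hM0 : 0 ≤ M := by
    obtain ⟨lam, hlam, l, hl, hZ⟩ := hMmax
    exact hZ ▸ hZ0 lam hlam l hl
  have haB : lowerBound B ≤ upperBound B := lb_le_ub B
  have haR : lowerBound R ≤ upperBound R := lb_le_ub R
  have hρpos : 0 ≤ ρ := (ContinuousLinearMap.nonneg_iff_isPositive ρ).mpr hρ.1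
  have hρsum : Summable fun k => (⟪e₁ k, ρ (e₁ k)⟫_ℂ).re := hρ.2.summable
  have hρtr : ∑' k, (⟪e₁ k, ρ (e₁ k)⟫_ℂ).re = 1 := hρ.2.tsum_eq
  have hφ₁pos : 0 ≤ φ₁ := (ContinuousLinearMap.nonneg_iff_isPositive φ₁).mpr hφ₁.1
  have hφ₂pos : 0 ≤ φ₂ := (ContinuousLinearMap.nonneg_iff_isPositive φ₂).mpr hφ₂.1
  have hs₁ : Summable fun k => (⟪e₂ k, φ₁ (e₂ k)⟫_ℂ).re := hφ₁.2.summable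
  have hs₂ : Summable fun k => (⟪e₂ k, φ₂ (e₂ k)⟫_ℂ).re := hφ₂.2.summable
  set T : H₂ →L[ℂ] H₂ := φ₁ - φ₂ with hTdef
  have hTsa : IsSelfAdjoint T := (pos_sa hφ₁pos).sub (pos_sa hφ₂pos)
  set fp : ℝ → ℝ := fun t => max t 0 with hfp
  set fm : ℝ → ℝ := fun t => max (-t) 0 with hfm
  have hfpc : Continuous fp := continuous_id.max continuous_const
  have hfmc : Continuous fm := continuous_neg.max continuous_const
  set Tp : H₂ →L[ℂ] H₂ := cfc fp T with hTp
  set Tm : H₂ →L[ℂ] H₂ := cfc fm T with hTm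
  have hTppos : 0 ≤ Tp := cfc_nonneg fun x _ => le_max_right _ _
  have hTmpos : 0 ≤ Tm := cfc_nonneg fun x _ => le_max_right _ _
  have hTpsum : Summable fun k => (⟪e₂ k, Tp (e₂ k)⟫_ℂ).re :=
    key_summable e₂ hφ₁pos hφ₂pos hs₁ hs₂ hfpc (fun t => le_max_right _ _)
      (fun t => max_le (le_abs_self t) (abs_nonneg t))
  have hTmsum : Summable fun k => (⟪e₂ k, Tm (e₂ k)⟫_ℂ).re :=
    key_summable e₂ hφ₁pos hφ₂pos hs₁ hs₂ hfmc (fun t => le_max_right _ _)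
      (fun t => max_le (neg_le_abs t) (abs_nonneg t))
  have hTsplit : Tp - Tm = T := by
    rw [hTp, hTm, ← cfc_sub fp fm T hfpc.continuousOn hfmc.continuousOn]
    calc cfc (fun t => fp t - fm t) T = cfc (id : ℝ → ℝ) T :=
          cfc_congr fun t _ => max_sub_max_neg t
      _ = T := cfc_id ℝ T
  have habsop : cfc (fun t : ℝ => |t|) T = Tp + Tm := by
    rw [hTp, hTm, ← cfc_add (a := T) fp fm hfpc.continuousOn hfmc.continuousOn]
    exact cfc_congr fun t _ => (max_add_max_neg t).symm
  have htn : traceNormAlong e₂ T =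
      (∑' k, (⟪e₂ k, Tp (e₂ k)⟫_ℂ).re) + ∑' k, (⟪e₂ k, Tm (e₂ k)⟫_ℂ).re := by
    unfold traceNormAlong
    rw [sqrt_star_mul_self hTsa, habsop]
    have h : ∀ k, (⟪e₂ k, (Tp + Tm) (e₂ k)⟫_ℂ).re
        = (⟪e₂ k, Tp (e₂ k)⟫_ℂ).re + (⟪e₂ k, Tm (e₂ k)⟫_ℂ).re := by
      intro k
      rw [ContinuousLinearMap.add_apply, inner_add_right, Complex.add_re]
    rw [tsum_congr h]
    exact Summable.tsum_add hTpsum hTmsum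
  -- B-side distribution function facts
  have hFdiff : ∀ u v : ℝ, (traceAlong e₁ (ρ * E v)).re - (traceAlong e₁ (ρ * E u)).re
      = (traceAlong e₁ (ρ * (E v - E u))).re := fun u v => trace_S_sub e₁ hρpos hρsum (E v) (E u)
  have hFmono : ∀ u v : ℝ, u ≤ v →
      (traceAlong e₁ (ρ * E u)).re ≤ (traceAlong e₁ (ρ * E v)).re := by
    intro u v huv
    have h0 := w_nonneg e₁ hρpos hρsum (hE.2 u v huv)
    linarith [hFdiff u v]
  have hFtot : (traceAlong e₁ (ρ * E (upperBound B))).re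
      - (traceAlong e₁ (ρ * E (lowerBound B))).re ≤ 1 := by
    rw [hFdiff]
    calc (traceAlong e₁ (ρ * (E (upperBound B) - E (lowerBound B)))).re
        ≤ ∑' k, (⟪e₁ k, ρ (e₁ k)⟫_ℂ).re := w_le e₁ hρpos hρsum (res_one_sub hE haB)
      _ = 1 := hρtr
  -- bound on g over the R interval
  have hgbdd : ∀ l ∈ Set.Icc (lowerBound R) (upperBound R), |g l| ≤ M := by
    intro l hl
    have key : ∀ ε > 0, -ε ≤ g l ∧ g l ≤ M + ε := by
      intro ε hε
      obtain ⟨δ, hδ, hint⟩ := hg l hl ε hε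
      obtain ⟨n, x, hn, hx0, hxn, hmono, hmesh, hicc⟩ := unif_partition haB hδ
      have hRS := hint n x x hn hx0 hxn (fun i _ => hmono i) (fun i _ => hmesh i)
        (fun i _ => ⟨le_refl _, hmono i⟩)
      have hterm : ∀ i ∈ Finset.range n,
          0 ≤ Z (x i) l *
            ((traceAlong e₁ (ρ * E (x (i+1)))).re - (traceAlong e₁ (ρ * E (x i))).re) ∧
          Z (x i) l * ((traceAlong e₁ (ρ * E (x (i+1)))).re - (traceAlong e₁ (ρ * E (x i))).re)
            ≤ M * ((traceAlong e₁ (ρ * E (x (i+1)))).re - (traceAlong e₁ (ρ * E (x i))).re) := by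
        intro i hi
        rw [Finset.mem_range] at hi
        have hxi := hicc i hi.le
        have hdF : 0 ≤ (traceAlong e₁ (ρ * E (x (i+1)))).re
            - (traceAlong e₁ (ρ * E (x i))).re := by
          linarith [hFmono (x i) (x (i+1)) (hmono i)]
        exact ⟨mul_nonneg (hZ0 _ hxi _ hl) hdF,
          mul_le_mul_of_nonneg_right (hZM _ hxi _ hl) hdF⟩
      have h1 : 0 ≤ RSSum (fun lam => Z lam l)
          (fun lam => (traceAlong e₁ (ρ * E lam)).re) n x x :=
        Finset.sum_nonneg fun i hi => (hterm i hi).1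
      have h2 : RSSum (fun lam => Z lam l)
          (fun lam => (traceAlong e₁ (ρ * E lam)).re) n x x ≤ M := by
        unfold RSSum
        calc ∑ i ∈ Finset.range n, Z (x i) l *
              ((traceAlong e₁ (ρ * E (x (i+1)))).re - (traceAlong e₁ (ρ * E (x i))).re)
            ≤ ∑ i ∈ Finset.range n,
              M * ((traceAlong e₁ (ρ * E (x (i+1)))).re - (traceAlong e₁ (ρ * E (x i))).re) :=
              Finset.sum_le_sum fun i hi => (hterm i hi).2
          _ = M * ((traceAlong e₁ (ρ * E (x n))).re - (traceAlong e₁ (ρ * E (x 0))).re) := by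
              rw [← Finset.mul_sum,
                Finset.sum_range_sub (fun i => (traceAlong e₁ (ρ * E (x i))).re)]
          _ ≤ M * 1 := by
              rw [hx0, hxn]
              exact mul_le_mul_of_nonneg_left hFtot hM0
          _ = M := mul_one M
      obtain ⟨hlo, hhi⟩ := abs_lt.mp hRS
      constructor <;> linarith
    have hgl0 : 0 ≤ g l := by
      have h := le_of_forall_pos_le_add
        (fun ε hε => by linarith [(key ε hε).1] : ∀ ε > 0, -g l ≤ 0 + ε)
      linarith
    have hglM : g l ≤ M := le_of_forall_pos_le_add fun ε hε => (key ε hε).2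
    rw [abs_le]
    exact ⟨by linarith, hglM⟩
  -- main estimate
  refine le_of_forall_pos_le_add ?_
  intro ε hε
  obtain ⟨δ₁, hδ₁, hint₁⟩ := hK₁ (ε/2) (by linarith)
  obtain ⟨δ₂, hδ₂, hint₂⟩ := hK₂ (ε/2) (by linarith)
  obtain ⟨n, x, hn, hx0, hxn, hmono, hmesh, hicc⟩ := unif_partition haR (lt_min hδ₁ hδ₂)
  have h₁ := hint₁ n x x hn hx0 hxn (fun i _ => hmono i)
    (fun i _ => lt_of_lt_of_le (hmesh i) (min_le_left _ _)) (fun i _ => ⟨le_refl _, hmono i⟩)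
  have h₂ := hint₂ n x x hn hx0 hxn (fun i _ => hmono i)
    (fun i _ => lt_of_lt_of_le (hmesh i) (min_le_right _ _)) (fun i _ => ⟨le_refl _, hmono i⟩)
  have hJp_diff : ∀ u v : ℝ, (traceAlong e₂ (Tp * E' v)).re - (traceAlong e₂ (Tp * E' u)).re
      = (traceAlong e₂ (Tp * (E' v - E' u))).re :=
    fun u v => trace_S_sub e₂ hTppos hTpsum (E' v) (E' u)
  have hJm_diff : ∀ u v : ℝ, (traceAlong e₂ (Tm * E' v)).re - (traceAlong e₂ (Tm * E' u)).re
      = (traceAlong e₂ (Tm * (E' v - E' u))).re :=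
    fun u v => trace_S_sub e₂ hTmpos hTmsum (E' v) (E' u)
  have hG_split : ∀ l : ℝ, (traceAlong e₂ (φ₁ * E' l)).re - (traceAlong e₂ (φ₂ * E' l)).re
      = (traceAlong e₂ (Tp * E' l)).re - (traceAlong e₂ (Tm * E' l)).re := by
    intro l
    have d1 : traceAlong e₂ (T * E' l)
        = traceAlong e₂ (φ₁ * E' l) - traceAlong e₂ (φ₂ * E' l) := by
      rw [hTdef, sub_mul]
      exact traceAlong_sub e₂ (diagc_summable e₂ hφ₁pos hs₁ (E' l))
        (diagc_summable e₂ hφ₂pos hs₂ (E' l))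
    have d2 : traceAlong e₂ (T * E' l)
        = traceAlong e₂ (Tp * E' l) - traceAlong e₂ (Tm * E' l) := by
      rw [← hTsplit, sub_mul]
      exact traceAlong_sub e₂ (diagc_summable e₂ hTppos hTpsum (E' l))
        (diagc_summable e₂ hTmpos hTmsum (E' l))
    have hre := congrArg Complex.re (d1.symm.trans d2)
    simpa [Complex.sub_re] using hre
  set RS₁ := RSSum g (fun l => (traceAlong e₂ (φ₁ * E' l)).re) n x x with hRS₁
  set RS₂ := RSSum g (fun l => (traceAlong e₂ (φ₂ * E' l)).re) n x x with hRS₂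
  have hcore : |RS₁ - RS₂| ≤ M * traceNormAlong e₂ T := by
    have hdiff : RS₁ - RS₂ = ∑ i ∈ Finset.range n, g (x i) *
        (((traceAlong e₂ (Tp * E' (x (i+1)))).re - (traceAlong e₂ (Tp * E' (x i))).re)
         - ((traceAlong e₂ (Tm * E' (x (i+1)))).re - (traceAlong e₂ (Tm * E' (x i))).re)) := by
      rw [hRS₁, hRS₂]
      unfold RSSum
      rw [← Finset.sum_sub_distrib]
      apply Finset.sum_congr rfl
      intro i _
      linear_combination (g (x i)) * hG_split (x (i+1)) - (g (x i)) * hG_split (x i)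
    have hb1 : |RS₁ - RS₂| ≤ ∑ i ∈ Finset.range n, M *
        (((traceAlong e₂ (Tp * E' (x (i+1)))).re - (traceAlong e₂ (Tp * E' (x i))).re)
         + ((traceAlong e₂ (Tm * E' (x (i+1)))).re - (traceAlong e₂ (Tm * E' (x i))).re)) := by
      rw [hdiff]
      refine (Finset.abs_sum_le_sum_abs _ _).trans ?_
      apply Finset.sum_le_sum
      intro i hi
      rw [Finset.mem_range] at hi
      have hxi := hicc i hi.le
      have hgb := hgbdd (x i) hxi
      have hΔp : 0 ≤ (traceAlong e₂ (Tp * E' (x (i+1)))).re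
          - (traceAlong e₂ (Tp * E' (x i))).re := by
        rw [hJp_diff]
        exact w_nonneg e₂ hTppos hTpsum (hE'.2 _ _ (hmono i))
      have hΔm : 0 ≤ (traceAlong e₂ (Tm * E' (x (i+1)))).re
          - (traceAlong e₂ (Tm * E' (x i))).re := by
        rw [hJm_diff]
        exact w_nonneg e₂ hTmpos hTmsum (hE'.2 _ _ (hmono i))
      rw [abs_mul]
      have h1 : |((traceAlong e₂ (Tp * E' (x (i+1)))).re - (traceAlong e₂ (Tp * E' (x i))).re)
          - ((traceAlong e₂ (Tm * E' (x (i+1)))).re - (traceAlong e₂ (Tm * E' (x i))).re)|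
          ≤ ((traceAlong e₂ (Tp * E' (x (i+1)))).re - (traceAlong e₂ (Tp * E' (x i))).re)
          + ((traceAlong e₂ (Tm * E' (x (i+1)))).re - (traceAlong e₂ (Tm * E' (x i))).re) := by
        rw [abs_le]
        constructor <;> linarith
      exact mul_le_mul hgb h1 (abs_nonneg _) hM0
    have htel : ∑ i ∈ Finset.range n, M *
        (((traceAlong e₂ (Tp * E' (x (i+1)))).re - (traceAlong e₂ (Tp * E' (x i))).re)
         + ((traceAlong e₂ (Tm * E' (x (i+1)))).re - (traceAlong e₂ (Tm * E' (x i))).re))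
        = M * (((traceAlong e₂ (Tp * E' (upperBound R))).re
            - (traceAlong e₂ (Tp * E' (lowerBound R))).re)
          + ((traceAlong e₂ (Tm * E' (upperBound R))).re
            - (traceAlong e₂ (Tm * E' (lowerBound R))).re)) := by
      rw [← Finset.mul_sum, Finset.sum_add_distrib,
        Finset.sum_range_sub (fun i => (traceAlong e₂ (Tp * E' (x i))).re),
        Finset.sum_range_sub (fun i => (traceAlong e₂ (Tm * E' (x i))).re), hx0, hxn]
    have hbp : (traceAlong e₂ (Tp * E' (upperBound R))).re
        - (traceAlong e₂ (Tp * E' (lowerBound R))).re ≤ ∑' k, (⟪e₂ k, Tp (e₂ k)⟫_ℂ).re := by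
      rw [hJp_diff]
      exact w_le e₂ hTppos hTpsum (res_one_sub hE' haR)
    have hbm : (traceAlong e₂ (Tm * E' (upperBound R))).re
        - (traceAlong e₂ (Tm * E' (lowerBound R))).re ≤ ∑' k, (⟪e₂ k, Tm (e₂ k)⟫_ℂ).re := by
      rw [hJm_diff]
      exact w_le e₂ hTmpos hTmsum (res_one_sub hE' haR)
    calc |RS₁ - RS₂| ≤ _ := hb1
      _ = _ := htel
      _ ≤ M * ((∑' k, (⟪e₂ k, Tp (e₂ k)⟫_ℂ).re) + ∑' k, (⟪e₂ k, Tm (e₂ k)⟫_ℂ).re) := by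
          apply mul_le_mul_of_nonneg_left _ hM0
          linarith
      _ = M * traceNormAlong e₂ T := by rw [htn]
  calc |K₁ - K₂| ≤ |K₁ - RS₁| + |RS₁ - K₂| := abs_sub_le K₁ RS₁ K₂
    _ ≤ |K₁ - RS₁| + (|RS₁ - RS₂| + |RS₂ - K₂|) := by
        linarith [abs_sub_le RS₁ RS₂ K₂]
    _ ≤ ε/2 + (M * traceNormAlong e₂ T + ε/2) := by
        have e1 : |K₁ - RS₁| < ε/2 := by rw [abs_sub_comm]; exact h₁
        have e2 : |RS₂ - K₂| < ε/2 := h₂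
        linarith [hcore]
    _ = M * traceNormAlong e₂ T + ε := by ring
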